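/- If a commutative ring R has the property that every countable direct sum of Gorenstein injective R-modules is Gorenstein injective, then every countable direct sum of injective R-modules is injective. -/

import Mathlib

universe u

open TensorProduct

/-- A `ℤ`-indexed chain complex of `R`-modules: modules `X i` with
differentials `d i : X (i+1) →ₗ[R] X i` satisfying `d ∘ d = 0`. -/
structure ModComplex (R : Type u) [CommRing R] : Type (u + 1) where
  X : ℤ → Type u
  [addCommGroup : ∀ i, AddCommGroup (X i)]
  [module : ∀ i, Module R (X i)]
  d : ∀ i : ℤ, X (i + 1) →ₗ[R] X i
  dd : ∀ i : ℤ, (d i).comp (d (i + 1)) = 0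

attribute [instance] ModComplex.addCommGroup ModComplex.module

namespace ModComplex

variable {R : Type u} [CommRing R] (L : ModComplex R)

/-- The complex is acyclic: exact at every spot. -/
def Acyclic : Prop := ∀ i : ℤ, Function.Exact (L.d (i + 1)) (L.d i)

/-- The complex `Hom_R(L, N)` is acyclic. -/
def HomAcyclic (N : Type u) [AddCommGroup N] [Module R N] : Prop :=
  ∀ i : ℤ, Function.Exact
    (fun φ : L.X i →ₗ[R] N => φ.comp (L.d i))
    (fun φ : L.X (i + 1) →ₗ[R] N => φ.comp (L.d (i + 1)))

/-- The complex `Hom_R(E, L)` is acyclic. -/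
def CoHomAcyclic (E : Type u) [AddCommGroup E] [Module R E] : Prop :=
  ∀ i : ℤ, Function.Exact
    (fun φ : E →ₗ[R] L.X (i + 1 + 1) => (L.d (i + 1)).comp φ)
    (fun φ : E →ₗ[R] L.X (i + 1) => (L.d i).comp φ)

/-- The complex `E ⊗_R L` is acyclic. -/
def TensorAcyclic (E : Type u) [AddCommGroup E] [Module R E] : Prop :=
  ∀ i : ℤ, Function.Exact
    (LinearMap.lTensor E (L.d (i + 1)))
    (LinearMap.lTensor E (L.d i))

/-- The complex consists of finitely generated projective modules. -/
def FGProj : Prop :=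
  ∀ i : ℤ, Module.Finite R (L.X i) ∧ Module.Projective R (L.X i)

/-- A totally acyclic complex: an acyclic complex of finitely generated
projective modules such that `Hom_R(L, R)` is acyclic. -/
def TotallyAcyclic : Prop := L.Acyclic ∧ L.FGProj ∧ L.HomAcyclic R

end ModComplex

/-- `M` is (isomorphic to) the cokernel of the differential `d 0 : X 1 → X 0`. -/
def IsCokerOf {R : Type u} [CommRing R] (L : ModComplex R)
    (M : Type u) [AddCommGroup M] [Module R M] : Prop :=
  ∃ f : L.X 0 →ₗ[R] M, Function.Surjective f ∧ LinearMap.ker f = LinearMap.range (L.d 0)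

/-- `M` is (isomorphic to) the kernel of the differential `d 0 : X 1 → X 0`. -/
def IsKerOf {R : Type u} [CommRing R] (L : ModComplex R)
    (M : Type u) [AddCommGroup M] [Module R M] : Prop :=
  ∃ f : M →ₗ[R] L.X 1, Function.Injective f ∧ LinearMap.range f = LinearMap.ker (L.d 0)

/-- `M` is totally reflexive: it is a cokernel of a differential in a totally
acyclic complex of finitely generated projective modules. -/
def IsTotallyReflexive (R : Type u) [CommRing R]
    (M : Type u) [AddCommGroup M] [Module R M] : Prop :=
  ∃ L : ModComplex R, L.TotallyAcyclic ∧ IsCokerOf L M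

/-- Gorenstein projective module. -/
def IsGorensteinProjective (R : Type u) [CommRing R]
    (A : Type u) [AddCommGroup A] [Module R A] : Prop :=
  ∃ L : ModComplex R, L.Acyclic ∧ (∀ i, Module.Projective R (L.X i)) ∧
    (∀ (Q : Type u) [AddCommGroup Q] [Module R Q],
      Module.Projective R Q → L.HomAcyclic Q) ∧
    IsCokerOf L A

/-- Gorenstein injective module. -/
def IsGorensteinInjective (R : Type u) [CommRing R]
    (B : Type u) [AddCommGroup B] [Module R B] : Prop :=
  ∃ L : ModComplex R, L.Acyclic ∧ (∀ i, Module.Injective R (L.X i)) ∧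
    (∀ (E : Type u) [AddCommGroup E] [Module R E],
      Module.Injective R E → L.CoHomAcyclic E) ∧
    IsKerOf L B

/-- Gorenstein flat module. -/
def IsGorensteinFlat (R : Type u) [CommRing R]
    (M : Type u) [AddCommGroup M] [Module R M] : Prop :=
  ∃ L : ModComplex R, L.Acyclic ∧ (∀ i, Module.Flat R (L.X i)) ∧
    (∀ (E : Type u) [AddCommGroup E] [Module R E],
      Module.Injective R E → L.TensorAcyclic E) ∧
    IsCokerOf L M

/-- `M` has projective dimension at most `n`. -/
def ProjDimLe (R : Type u) [CommRing R] :
    ℕ → ∀ (M : Type u) [AddCommGroup M] [Module R M], Prop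
  | 0, M, _, _ => Module.Projective R M
  | n + 1, M, _, _ =>
    ∃ (P : Type u) (_ : AddCommGroup P) (_ : Module R P) (f : P →ₗ[R] M),
      Module.Projective R P ∧ Function.Surjective f ∧
        ProjDimLe R n (LinearMap.ker f)

/-- `M` has flat dimension at most `n`. -/
def FlatDimLe (R : Type u) [CommRing R] :
    ℕ → ∀ (M : Type u) [AddCommGroup M] [Module R M], Prop
  | 0, M, _, _ => Module.Flat R M
  | n + 1, M, _, _ =>
    ∃ (F : Type u) (_ : AddCommGroup F) (_ : Module R F) (f : F →ₗ[R] M),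
      Module.Flat R F ∧ Function.Surjective f ∧
        FlatDimLe R n (LinearMap.ker f)

/-- `M` has Gorenstein projective dimension at most `n`. -/
def GProjDimLe (R : Type u) [CommRing R] :
    ℕ → ∀ (M : Type u) [AddCommGroup M] [Module R M], Prop
  | 0, M, _, _ => IsGorensteinProjective R M
  | n + 1, M, _, _ =>
    ∃ (P : Type u) (_ : AddCommGroup P) (_ : Module R P) (f : P →ₗ[R] M),
      IsGorensteinProjective R P ∧ Function.Surjective f ∧
        GProjDimLe R n (LinearMap.ker f)

/-- The projective dimension, as an element of `ℕ∞`. -/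
noncomputable def projDim (R : Type u) [CommRing R]
    (M : Type u) [AddCommGroup M] [Module R M] : ℕ∞ :=
  sInf {n : ℕ∞ | ∃ m : ℕ, n = m ∧ ProjDimLe R m M}

/-- The Gorenstein projective dimension, as an element of `ℕ∞`. -/
noncomputable def gProjDim (R : Type u) [CommRing R]
    (M : Type u) [AddCommGroup M] [Module R M] : ℕ∞ :=
  sInf {n : ℕ∞ | ∃ m : ℕ, n = m ∧ GProjDimLe R m M}

-- auxiliary: disk complex
def diskComplexAux (R : Type u) [CommRing R] (B : Type u) [AddCommGroup B] [Module R B] :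
    ModComplex R where
  X _ := B
  d i := if Even i then 0 else LinearMap.id
  dd i := by
    by_cases h : Even i
    · simp [h]
    · have h1 : Even (i + 1) := Int.even_add_one.mpr h
      simp [h, h1]

theorem gi_of_injective_aux (R : Type u) [CommRing R] (B : Type u) [AddCommGroup B] [Module R B]
    (hB : Module.Injective R B) : IsGorensteinInjective R B := by
  refine ⟨diskComplexAux R B, ?_, fun _ => hB, ?_, LinearMap.id, fun _ _ h => h, ?_⟩
  · intro i y
    by_cases h : Even i
    · have h1 : ¬ Even (i + 1) := by simpa [Int.even_add_one] using h
      simp [diskComplexAux, h, h1]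
      exact ⟨fun _ => ⟨y, rfl⟩, fun _ => rfl⟩
    · have h1 : Even (i + 1) := Int.even_add_one.mpr h
      simp [diskComplexAux, h, h1, eq_comm]
      exact ⟨fun hy => ⟨0, hy.symm⟩, fun ⟨x, hx⟩ => hx.symm⟩
  · intro E _ _ _ i ψ
    by_cases h : Even i
    · have h1 : ¬ Even (i + 1) := by simpa [Int.even_add_one] using h
      simp only [diskComplexAux, if_pos h, if_neg h1, LinearMap.zero_comp, LinearMap.id_comp]
      exact ⟨fun _ => ⟨ψ, rfl⟩, fun _ => rfl⟩
    · have h1 : Even (i + 1) := Int.even_add_one.mpr h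
      simp only [diskComplexAux, if_neg h, if_pos h1, LinearMap.zero_comp, LinearMap.id_comp]
      exact ⟨fun hψ => ⟨(0 : E →ₗ[R] (diskComplexAux R B).X (i + 1 + 1)), hψ.symm⟩, fun ⟨x, hx⟩ => hx.symm⟩
  · have h0 : Even (0 : ℤ) := Even.zero
    ext x
    simp [diskComplexAux, h0]
    exact ⟨fun _ => rfl, fun _ => ⟨x, rfl⟩⟩

theorem injective_of_retract_aux {R : Type u} [CommRing R] {M N : Type u}
    [AddCommGroup M] [Module R M] [AddCommGroup N] [Module R N]
    (hN : Module.Injective R N) (i : M →ₗ[R] N) (r : N →ₗ[R] M)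
    (hr : r.comp i = LinearMap.id) : Module.Injective R M := by
  constructor
  intro X Y _ _ _ _ f hf g
  obtain ⟨h', hh⟩ := hN.out f hf (i.comp g)
  refine ⟨r.comp h', fun x => ?_⟩
  have := congrArg r (hh x)
  simpa [LinearMap.comp_apply] using (DFunLike.congr_fun hr (g x)) ▸ this


/-- If every countable direct sum of Gorenstein injective `R`-modules is
Gorenstein injective, then every countable direct sum of injective
`R`-modules is injective. -/
theorem noetherian_of_directSum_gorensteinInjective {R : Type u} [CommRing R]
    (h : ∀ (B : ℕ → Type u) [∀ n, AddCommGroup (B n)] [∀ n, Module R (B n)],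
      (∀ n, IsGorensteinInjective R (B n)) →
        IsGorensteinInjective R (DirectSum ℕ B))
    (E : ℕ → Type u) [∀ n, AddCommGroup (E n)] [∀ n, Module R (E n)]
    (hE : ∀ n, Module.Injective R (E n)) :
    Module.Injective R (DirectSum ℕ E) := by
  obtain ⟨L, hac, hinj, hcohom, f, hfinj, hfrange⟩ :=
    h E (fun n => gi_of_injective_aux R (E n) (hE n))
  have key : ∀ n, ∃ χ : E n →ₗ[R] L.X (0 + 1 + 1),
      (L.d (0 + 1)).comp χ = f.comp (DirectSum.lof R ℕ E n) := by
    intro n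
    have hex := hcohom (E n) (hE n) 0
    have h0 : (L.d 0).comp (f.comp (DirectSum.lof R ℕ E n)) = 0 := by
      ext x
      have : f (DirectSum.lof R ℕ E n x) ∈ LinearMap.ker (L.d 0) := by
        rw [← hfrange]; exact LinearMap.mem_range_self _ _
      simpa [LinearMap.mem_ker] using this
    exact (hex (f.comp (DirectSum.lof R ℕ E n))).mp h0
  choose χ hχ using key
  set s := DirectSum.toModule R ℕ (L.X (0 + 1 + 1)) χ with hs_def
  have hs : (L.d (0 + 1)).comp s = f := by
    apply DirectSum.linearMap_ext
    intro n
    ext x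
    simp only [LinearMap.comp_apply, hs_def, DirectSum.toModule_lof]
    exact DFunLike.congr_fun (hχ n) x
  have hmem : ∀ x, L.d (0 + 1) x ∈ LinearMap.range f := by
    intro x
    rw [hfrange]
    simpa [LinearMap.mem_ker] using DFunLike.congr_fun (L.dd 0) x
  set e := LinearEquiv.ofInjective f hfinj with he_def
  set r : L.X (0 + 1 + 1) →ₗ[R] DirectSum ℕ E :=
    (e.symm.toLinearMap).comp ((L.d (0 + 1)).codRestrict (LinearMap.range f) hmem) with hr_def
  have hfr : ∀ x, f (r x) = L.d (0 + 1) x := by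
    intro x
    have h1 : e (r x) = (L.d (0 + 1)).codRestrict (LinearMap.range f) hmem x := by
      simp [hr_def]
    have h2 : (↑(e (r x)) : L.X 1) = f (r x) := by
      simp [he_def]
    rw [← h2, h1]
    rfl
  have hretr : ∀ x, r (s x) = x := by
    intro x
    apply hfinj
    rw [hfr]
    exact DFunLike.congr_fun hs x
  exact injective_of_retract_aux (hinj (0 + 1 + 1)) s r (LinearMap.ext hretr)
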